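/- For every integer d ≥ 1, the integral over the simplex Δ_{d+1} = {x ∈ ℝ^{d+1} : x_j ≥ 0 for all j and ∑_{j=1}^{d+1} x_j ≤ 1} of the function x ↦ (∑_{j=1}^{d+1} x_j²)^{−d/2} is finite, and is bounded above by 2π (π/2)^{d−1}. -/

import Mathlib

open MeasureTheory Real Set

lemma aux_inv_add_sq {s : ℝ} (hs : 0 < s) (t : ℝ) :
    (s + t ^ 2)⁻¹ = s⁻¹ * (1 + (t * (Real.sqrt s)⁻¹) ^ 2)⁻¹ := by
  have h2 : Real.sqrt s ^ 2 = s := Real.sq_sqrt hs.le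
  have hsq : Real.sqrt s ≠ 0 := by positivity
  field_simp
  rw [h2]; ring


lemma integrable_inv_add_sq {s : ℝ} (hs : 0 < s) :
    Integrable (fun t : ℝ => (s + t ^ 2)⁻¹) := by
  have hsq : Real.sqrt s ≠ 0 := by positivity
  have h : (fun t : ℝ => (s + t ^ 2)⁻¹)
      = fun t : ℝ => s⁻¹ * (1 + (t * (Real.sqrt s)⁻¹) ^ 2)⁻¹ := funext (aux_inv_add_sq hs)
  rw [h]
  exact (integrable_inv_one_add_sq.comp_mul_right' (inv_ne_zero hsq)).const_mul _

lemma integral_Ioi_inv_add_sq {s : ℝ} (hs : 0 < s) :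
    ∫ t in Ioi (0:ℝ), (s + t ^ 2)⁻¹ = π / (2 * Real.sqrt s) := by
  have hsq : (0:ℝ) < Real.sqrt s := Real.sqrt_pos.2 hs
  have h2 : Real.sqrt s ^ 2 = s := Real.sq_sqrt hs.le
  simp_rw [aux_inv_add_sq hs]
  rw [integral_const_mul, integral_comp_mul_right_Ioi (fun x => (1 + x ^ 2)⁻¹) 0 (inv_pos.2 hsq)]
  rw [zero_mul, integral_Ioi_inv_one_add_sq, arctan_zero, sub_zero]
  rw [smul_eq_mul, inv_inv]
  field_simp
  linear_combination h2

lemma lintegral_Ioi_inv_add_sq {s : ℝ} (hs : 0 < s) :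
    ∫⁻ t in Ioi (0:ℝ), ENNReal.ofReal ((s + t ^ 2)⁻¹) =
      ENNReal.ofReal (π / (2 * Real.sqrt s)) := by
  rw [← ofReal_integral_eq_lintegral_ofReal ((integrable_inv_add_sq hs).integrableOn)
    (Filter.Eventually.of_forall fun t => by positivity), integral_Ioi_inv_add_sq hs]

lemma inner_bound (k : ℕ) {s : ℝ} (hs : 0 < s) :
    ∫⁻ t in Ioi (0:ℝ), ENNReal.ofReal ((s + t ^ 2) ^ (-(k + 2 : ℝ) / 2)) ≤
      ENNReal.ofReal (π / 2) * ENNReal.ofReal (s ^ (-(k + 1 : ℝ) / 2)) := by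
  have hpt : ∀ t : ℝ, (s + t ^ 2) ^ (-(k + 2 : ℝ) / 2) ≤
      s ^ (-(k : ℝ) / 2) * (s + t ^ 2)⁻¹ := by
    intro t
    have hst : 0 < s + t ^ 2 := by positivity
    have h1 : (s + t ^ 2) ^ (-(k + 2 : ℝ) / 2)
        = (s + t ^ 2) ^ (-(k : ℝ) / 2) * (s + t ^ 2)⁻¹ := by
      rw [← Real.rpow_neg_one (s + t ^ 2), ← Real.rpow_add hst]
      congr 1
      ring
    rw [h1]
    exact mul_le_mul_of_nonneg_right
      (Real.rpow_le_rpow_of_nonpos hs (le_add_of_nonneg_right (sq_nonneg t))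
        (by have := Nat.cast_nonneg (α := ℝ) k; linarith)) (inv_nonneg.2 hst.le)
  calc ∫⁻ t in Ioi (0:ℝ), ENNReal.ofReal ((s + t ^ 2) ^ (-(k + 2 : ℝ) / 2))
      ≤ ∫⁻ t in Ioi (0:ℝ), ENNReal.ofReal (s ^ (-(k : ℝ) / 2)) *
          ENNReal.ofReal ((s + t ^ 2)⁻¹) := by
        refine lintegral_mono fun t => ?_
        rw [← ENNReal.ofReal_mul (Real.rpow_nonneg hs.le _)]
        exact ENNReal.ofReal_le_ofReal (hpt t)
    _ = ENNReal.ofReal (s ^ (-(k : ℝ) / 2)) * ENNReal.ofReal (π / (2 * Real.sqrt s)) := by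
        rw [lintegral_const_mul _ (by measurability), lintegral_Ioi_inv_add_sq hs]
    _ = ENNReal.ofReal (π / 2) * ENNReal.ofReal (s ^ (-(k + 1 : ℝ) / 2)) := by
        rw [← ENNReal.ofReal_mul (Real.rpow_nonneg hs.le _),
          ← ENNReal.ofReal_mul (by positivity)]
        congr 1
        have h1 : s ^ (-(k + 1 : ℝ) / 2) = s ^ (-(k : ℝ) / 2) * s ^ (-(1:ℝ)/2) := by
          rw [← Real.rpow_add hs]; congr 1; ring
        have h2 : s ^ (-(1:ℝ)/2) = (Real.sqrt s)⁻¹ := by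
          rw [show (-(1:ℝ)/2) = -(1/2) by norm_num, Real.rpow_neg hs.le,
            ← Real.sqrt_eq_rpow]
        rw [h1, h2]
        have hsq : (0:ℝ) < Real.sqrt s := Real.sqrt_pos.2 hs
        field_simp

lemma lintegral_Ioc_rpow_half :
    ∫⁻ x in Ioc (0:ℝ) 1, ENNReal.ofReal (x ^ (-(1:ℝ)/2)) = ENNReal.ofReal 2 := by
  have hint : IntervalIntegrable (fun x : ℝ => x ^ (-(1:ℝ)/2)) volume 0 1 :=
    intervalIntegral.intervalIntegrable_rpow' (by norm_num)
  have hev : ∫ x in Ioc (0:ℝ) 1, x ^ (-(1:ℝ)/2) = 2 := by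
    rw [← intervalIntegral.integral_of_le zero_le_one,
      integral_rpow (Or.inl (by norm_num))]
    norm_num
  rw [← ofReal_integral_eq_lintegral_ofReal
    ((intervalIntegrable_iff_integrableOn_Ioc_of_le zero_le_one).1 hint) ?_, hev]
  filter_upwards [ae_restrict_mem measurableSet_Ioc] with x hx
  exact Real.rpow_nonneg hx.1.le _

set_option maxHeartbeats 1000000 in
lemma prod_bound :
    ∫⁻ p : ℝ × ℝ in Ioc (0:ℝ) 1 ×ˢ Ioc (0:ℝ) 1,
      ENNReal.ofReal ((p.1 ^ 2 + p.2 ^ 2) ^ (-(1:ℝ) / 2)) ≤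
    ENNReal.ofReal (2 * Real.sqrt 2) := by
  have hmeas : Measurable (fun x : ℝ => ENNReal.ofReal (x ^ (-(1:ℝ)/2))) := by measurability
  have step1 : ∫⁻ p : ℝ × ℝ in Ioc (0:ℝ) 1 ×ˢ Ioc (0:ℝ) 1,
      ENNReal.ofReal ((p.1 ^ 2 + p.2 ^ 2) ^ (-(1:ℝ) / 2)) ≤
      ∫⁻ p : ℝ × ℝ in Ioc (0:ℝ) 1 ×ˢ Ioc (0:ℝ) 1,
        ENNReal.ofReal ((2:ℝ) ^ (-(1:ℝ)/2)) *
          (ENNReal.ofReal (p.1 ^ (-(1:ℝ)/2)) * ENNReal.ofReal (p.2 ^ (-(1:ℝ)/2))) := by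
    refine setLIntegral_mono' (measurableSet_Ioc.prod measurableSet_Ioc) fun p hp => ?_
    obtain ⟨⟨h1, _⟩, ⟨h2, _⟩⟩ := hp
    rw [← ENNReal.ofReal_mul (by positivity), ← ENNReal.ofReal_mul (by positivity)]
    refine ENNReal.ofReal_le_ofReal ?_
    have key : (p.1 ^ 2 + p.2 ^ 2) ^ (-(1:ℝ)/2) ≤ (2 * (p.1 * p.2)) ^ (-(1:ℝ)/2) :=
      Real.rpow_le_rpow_of_nonpos (by positivity) (by nlinarith [sq_nonneg (p.1 - p.2)]) (by norm_num)
    refine key.trans (le_of_eq ?_)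
    rw [Real.mul_rpow (by norm_num) (by positivity), Real.mul_rpow h1.le h2.le]
  have step2 : ∫⁻ p : ℝ × ℝ in Ioc (0:ℝ) 1 ×ˢ Ioc (0:ℝ) 1,
      ENNReal.ofReal ((2:ℝ) ^ (-(1:ℝ)/2)) *
        (ENNReal.ofReal (p.1 ^ (-(1:ℝ)/2)) * ENNReal.ofReal (p.2 ^ (-(1:ℝ)/2)))
      = ENNReal.ofReal ((2:ℝ) ^ (-(1:ℝ)/2)) * (ENNReal.ofReal 2 * ENNReal.ofReal 2) := by
    have hm2 : Measurable fun p : ℝ × ℝ =>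
        ENNReal.ofReal (p.1 ^ (-(1:ℝ)/2)) * ENNReal.ofReal (p.2 ^ (-(1:ℝ)/2)) := by
      measurability
    rw [lintegral_const_mul _ hm2]
    congr 1
    rw [Measure.volume_eq_prod, ← Measure.prod_restrict,
      lintegral_prod_mul hmeas.aemeasurable hmeas.aemeasurable, lintegral_Ioc_rpow_half]
  have step3 : ENNReal.ofReal ((2:ℝ) ^ (-(1:ℝ)/2)) * (ENNReal.ofReal 2 * ENNReal.ofReal 2)
      ≤ ENNReal.ofReal (2 * Real.sqrt 2) := by
    rw [← ENNReal.ofReal_mul (by norm_num), ← ENNReal.ofReal_mul (by positivity)]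
    refine ENNReal.ofReal_le_ofReal (le_of_eq ?_)
    have h2 : Real.sqrt 2 ^ 2 = 2 := Real.sq_sqrt (by norm_num)
    have h3 : (2:ℝ) ^ (-(1:ℝ)/2) = (Real.sqrt 2)⁻¹ := by
      rw [show (-(1:ℝ)/2) = -(1/2) by norm_num, Real.rpow_neg (by norm_num),
        ← Real.sqrt_eq_rpow]
    rw [h3]
    have hsq : (0:ℝ) < Real.sqrt 2 := Real.sqrt_pos.2 (by norm_num)
    rw [inv_mul_eq_div, div_eq_iff hsq.ne']
    nlinarith [h2]
  exact step1.trans (step2.le.trans step3)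

lemma measurable_simplex_set (n : ℕ) :
    MeasurableSet {x : Fin (n + 2) → ℝ | (∀ j, 0 ≤ x j) ∧ x 0 + x 1 ≤ 1} := by
  rw [Set.setOf_and, Set.setOf_forall]
  exact (MeasurableSet.iInter fun j =>
    measurableSet_le measurable_const (measurable_pi_apply j)).inter
    (measurableSet_le ((measurable_pi_apply 0).add (measurable_pi_apply 1)) measurable_const)

lemma measurable_integrand (n : ℕ) (c : ℝ) :
    Measurable fun x : Fin n → ℝ => ENNReal.ofReal ((∑ j, x j ^ 2) ^ c) := by
  measurability

lemma base2 :
    ∫⁻ x : Fin 2 → ℝ in {x : Fin 2 → ℝ | (∀ j, 0 ≤ x j) ∧ x 0 + x 1 ≤ 1},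
      ENNReal.ofReal ((∑ j, x j ^ 2) ^ (-(1:ℝ) / 2)) ≤ ENNReal.ofReal (2 * Real.sqrt 2) := by
  have e := MeasurableEquiv.piFinTwo (fun _ : Fin 2 => ℝ)
  set S := {x : Fin 2 → ℝ | (∀ j, 0 ≤ x j) ∧ x 0 + x 1 ≤ 1} with hSdef
  have hS : MeasurableSet S := measurable_simplex_set 0
  have hvol : (volume : Measure (Fin 2 → ℝ)) =
      Measure.map (MeasurableEquiv.piFinTwo (fun _ : Fin 2 => ℝ)).symm volume :=
    ((volume_preserving_piFinTwo (fun _ : Fin 2 => ℝ)).symm _).map_eq.symm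
  rw [hvol, setLIntegral_map hS (measurable_integrand 2 _)
    (MeasurableEquiv.measurable _)]
  have hfun : ∀ p : ℝ × ℝ,
      (∑ j, ((MeasurableEquiv.piFinTwo (fun _ : Fin 2 => ℝ)).symm p) j ^ 2) =
        p.1 ^ 2 + p.2 ^ 2 := fun p => by
    rw [Fin.sum_univ_two]; rfl
  simp_rw [hfun]
  have hsub : (MeasurableEquiv.piFinTwo (fun _ : Fin 2 => ℝ)).symm ⁻¹' S ⊆
      (Ioc (0:ℝ) 1 ×ˢ Ioc (0:ℝ) 1) ∪ ({p : ℝ × ℝ | p.1 = 0} ∪ {p : ℝ × ℝ | p.2 = 0}) := by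
    rintro p ⟨hpos, hsum⟩
    have h0 : (0:ℝ) ≤ p.1 := hpos 0
    have h1 : (0:ℝ) ≤ p.2 := hpos 1
    have hsum' : p.1 + p.2 ≤ 1 := hsum
    rcases eq_or_lt_of_le h0 with h | h
    · exact Or.inr (Or.inl h.symm)
    rcases eq_or_lt_of_le h1 with h' | h'
    · exact Or.inr (Or.inr h'.symm)
    exact Or.inl ⟨⟨h, by linarith⟩, ⟨h', by linarith⟩⟩
  refine le_trans (lintegral_mono_set hsub) ?_
  refine le_trans (lintegral_union_le _ _ _) ?_
  have hz1 : volume {p : ℝ × ℝ | p.1 = 0} = 0 := by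
    have : {p : ℝ × ℝ | p.1 = 0} = ({0} : Set ℝ) ×ˢ (univ : Set ℝ) := by
      ext p
      simp only [mem_setOf_eq, mem_prod, mem_singleton_iff, mem_univ, and_true]
    rw [this, Measure.volume_eq_prod, Measure.prod_prod]
    simp
  have hz2 : volume {p : ℝ × ℝ | p.2 = 0} = 0 := by
    have : {p : ℝ × ℝ | p.2 = 0} = (univ : Set ℝ) ×ˢ ({0} : Set ℝ) := by
      ext p
      simp only [mem_setOf_eq, mem_prod, mem_singleton_iff, mem_univ, true_and]
    rw [this, Measure.volume_eq_prod, Measure.prod_prod]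
    simp
  have h2 : ∫⁻ p : ℝ × ℝ in {p : ℝ × ℝ | p.1 = 0} ∪ {p : ℝ × ℝ | p.2 = 0},
      ENNReal.ofReal ((p.1 ^ 2 + p.2 ^ 2) ^ (-(1:ℝ) / 2)) = 0 :=
    setLIntegral_measure_zero _ _ (measure_union_null hz1 hz2)
  rw [h2, add_zero]
  exact prod_bound

lemma key (k : ℕ) :
    ∫⁻ x : Fin (k + 2) → ℝ in {x : Fin (k + 2) → ℝ | (∀ j, 0 ≤ x j) ∧ x 0 + x 1 ≤ 1},
      ENNReal.ofReal ((∑ j, x j ^ 2) ^ (-((k : ℝ) + 1) / 2)) ≤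
      ENNReal.ofReal (π / 2) ^ k * ENNReal.ofReal (2 * Real.sqrt 2) := by
  induction k with
  | zero =>
    simpa using base2
  | succ k ih =>
    classical
    set S2 := {y : Fin (k + 2) → ℝ | (∀ j, 0 ≤ y j) ∧ y 0 + y 1 ≤ 1} with hS2def
    have hS2 : MeasurableSet S2 := measurable_simplex_set k
    set S' := {x : Fin (k + 3) → ℝ | (∀ j, 0 ≤ x j) ∧ x 0 + x 1 ≤ 1} with hS'def
    have hS' : MeasurableSet S' := measurable_simplex_set (k + 1)
    have hcast : (-(((k + 1 : ℕ) : ℝ) + 1) / 2) = -((k : ℝ) + 2) / 2 := by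
      push_cast; ring
    rw [hcast]
    set f : (Fin (k + 3) → ℝ) → ENNReal :=
      fun x => ENNReal.ofReal ((∑ j, x j ^ 2) ^ (-((k : ℝ) + 2) / 2)) with hfdef
    have hf : Measurable f := measurable_integrand _ _
    set e := MeasurableEquiv.piFinSuccAbove (fun _ : Fin (k + 3) => ℝ) (Fin.last (k + 2))
      with hedef
    have hmp : MeasurePreserving e.symm :=
      (volume_preserving_piFinSuccAbove (fun _ : Fin (k + 3) => ℝ) (Fin.last (k + 2))).symm e
    have hGmeas : Measurable (S'.indicator f) := hf.indicator hS'
    have hsnoc : ∀ (t : ℝ) (y : Fin (k + 2) → ℝ), e.symm (t, y) = Fin.snoc y t := by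
      intro t y
      rw [hedef]
      simp [MeasurableEquiv.piFinSuccAbove, Fin.insertNth_last]
      funext j
      by_cases h : (j : ℕ) < k + 2 <;> simp [Fin.snoc, h]
    have h1 : ∫⁻ x in S', f x =
        ∫⁻ p : ℝ × (Fin (k + 2) → ℝ), S'.indicator f (e.symm p) := by
      rw [← lintegral_indicator hS', ← hmp.lintegral_comp hGmeas]
    have h2 : ∫⁻ p : ℝ × (Fin (k + 2) → ℝ), S'.indicator f (e.symm p) =
        ∫⁻ y : Fin (k + 2) → ℝ, ∫⁻ t : ℝ, S'.indicator f (e.symm (t, y)) := by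
      rw [Measure.volume_eq_prod]
      exact lintegral_prod_symm _ (hGmeas.comp e.symm.measurable).aemeasurable
    have hpt : ∀ (y : Fin (k + 2) → ℝ) (t : ℝ),
        S'.indicator f (e.symm (t, y)) =
          if y ∈ S2 then
            (Ici (0:ℝ)).indicator
              (fun t' => ENNReal.ofReal
                (((∑ j, y j ^ 2) + t' ^ 2) ^ (-((k : ℝ) + 2) / 2))) t
          else 0 := by
      intro y t
      have hsum : ∑ j, (Fin.snoc y t : Fin (k + 3) → ℝ) j ^ 2 = (∑ j, y j ^ 2) + t ^ 2 := by
        rw [Fin.sum_univ_castSucc]; simp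
      have h0 : (Fin.snoc y t : Fin (k + 3) → ℝ) 0 = y 0 := by
        have h : (0 : Fin (k + 3)) = Fin.castSucc (0 : Fin (k + 2)) := by simp [Fin.ext_iff]
        rw [h, Fin.snoc_castSucc]
      have h1' : (Fin.snoc y t : Fin (k + 3) → ℝ) 1 = y 1 := by
        have h : (1 : Fin (k + 3)) = Fin.castSucc (1 : Fin (k + 2)) := by simp [Fin.ext_iff]
        rw [h, Fin.snoc_castSucc]
      have hpos : (∀ j, 0 ≤ (Fin.snoc y t : Fin (k + 3) → ℝ) j) ↔ (∀ j, 0 ≤ y j) ∧ 0 ≤ t := by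
        constructor
        · intro h
          refine ⟨fun j => ?_, ?_⟩
          · have := h (Fin.castSucc j); rwa [Fin.snoc_castSucc] at this
          · have := h (Fin.last _); rwa [Fin.snoc_last] at this
        · rintro ⟨ha, hb⟩ j
          refine Fin.lastCases ?_ ?_ j
          · rwa [Fin.snoc_last]
          · intro i; rw [Fin.snoc_castSucc]; exact ha i
      have hmem : (Fin.snoc y t : Fin (k + 3) → ℝ) ∈ S' ↔ y ∈ S2 ∧ t ∈ Ici (0:ℝ) := by
        rw [hS'def, hS2def]
        simp only [mem_setOf_eq, mem_Ici, hpos, h0, h1']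
        tauto
      rw [hsnoc t y, Set.indicator_apply]
      by_cases hy : y ∈ S2
      · by_cases ht : t ∈ Ici (0:ℝ)
        · rw [if_pos (hmem.2 ⟨hy, ht⟩), if_pos hy, Set.indicator_of_mem ht, hfdef]
          simp only [hsum]
        · rw [if_neg (fun hc => ht (hmem.1 hc).2), if_pos hy, Set.indicator_of_notMem ht]
      · rw [if_neg (fun hc => hy (hmem.1 hc).1), if_neg hy]
    have hinner : ∀ y : Fin (k + 2) → ℝ, y 0 ≠ 0 →
        (∫⁻ t : ℝ, S'.indicator f (e.symm (t, y))) ≤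
          S2.indicator (fun y' => ENNReal.ofReal (π / 2) *
            ENNReal.ofReal ((∑ j, y' j ^ 2) ^ (-((k : ℝ) + 1) / 2))) y := by
      intro y hy0
      simp_rw [hpt y]
      by_cases hy : y ∈ S2
      · simp only [if_pos hy]
        rw [Set.indicator_of_mem hy,
          lintegral_indicator measurableSet_Ici, ← MeasureTheory.restrict_Ioi_eq_restrict_Ici]
        have hs : 0 < ∑ j, y j ^ 2 := by
          have h00 : 0 < y 0 ^ 2 := by positivity
          have hle : y 0 ^ 2 ≤ ∑ j, y j ^ 2 :=
            Finset.single_le_sum (f := fun j => y j ^ 2)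
              (fun j _ => sq_nonneg _) (Finset.mem_univ 0)
          linarith
        exact inner_bound k hs
      · simp only [if_neg hy]
        rw [Set.indicator_of_notMem hy]
        simp
    calc ∫⁻ x in S', f x
        = ∫⁻ y : Fin (k + 2) → ℝ, ∫⁻ t : ℝ, S'.indicator f (e.symm (t, y)) := by
          rw [h1, h2]
      _ ≤ ∫⁻ y : Fin (k + 2) → ℝ,
            S2.indicator (fun y' => ENNReal.ofReal (π / 2) *
              ENNReal.ofReal ((∑ j, y' j ^ 2) ^ (-((k : ℝ) + 1) / 2))) y := by
          refine lintegral_mono_ae ?_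
          have hnull : volume {y : Fin (k + 2) → ℝ | y 0 = 0} = 0 := by
            rw [volume_pi]
            exact Measure.pi_hyperplane _ 0 0
          have hae : ∀ᵐ y : Fin (k + 2) → ℝ, y 0 ≠ 0 := by
            rw [ae_iff]
            simpa using hnull
          filter_upwards [hae] with y hy using hinner y hy
      _ = ENNReal.ofReal (π / 2) *
            ∫⁻ y in S2, ENNReal.ofReal ((∑ j, y j ^ 2) ^ (-((k : ℝ) + 1) / 2)) := by
          rw [lintegral_indicator hS2, lintegral_const_mul _ (measurable_integrand _ _)]
      _ ≤ ENNReal.ofReal (π / 2) *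
            (ENNReal.ofReal (π / 2) ^ k * ENNReal.ofReal (2 * Real.sqrt 2)) := by
          exact mul_le_mul_right ih _
      _ = ENNReal.ofReal (π / 2) ^ (k + 1) * ENNReal.ofReal (2 * Real.sqrt 2) := by
          ring

/-- For every integer `d ≥ 1`, the integral over the simplex
`Δ_{d+1} = {x ∈ ℝ^{d+1} : x_j ≥ 0, ∑ x_j ≤ 1}` of `x ↦ (∑_{j=1}^{d+1} x_j²)^{−d/2}`
is finite and bounded above by `2π (π/2)^{d−1}`. -/
theorem lintegral_simplex_inv_norm_sq_le (d : ℕ) (hd : 1 ≤ d) :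
    (∫⁻ x in {x : Fin (d + 1) → ℝ | (∀ j, 0 ≤ x j) ∧ ∑ j, x j ≤ 1},
        ENNReal.ofReal ((∑ j, (x j) ^ 2) ^ (-(d : ℝ) / 2)) ∂volume) ≤
          ENNReal.ofReal (2 * π * (π / 2) ^ (d - 1)) ∧
    (∫⁻ x in {x : Fin (d + 1) → ℝ | (∀ j, 0 ≤ x j) ∧ ∑ j, x j ≤ 1},
        ENNReal.ofReal ((∑ j, (x j) ^ 2) ^ (-(d : ℝ) / 2)) ∂volume) < ⊤ := by
  obtain ⟨k, rfl⟩ : ∃ k, d = k + 1 := ⟨d - 1, (Nat.succ_pred_eq_of_pos hd).symm⟩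
  have hmain : (∫⁻ x in {x : Fin (k + 1 + 1) → ℝ | (∀ j, 0 ≤ x j) ∧ ∑ j, x j ≤ 1},
      ENNReal.ofReal ((∑ j, (x j) ^ 2) ^ (-((k + 1 : ℕ) : ℝ) / 2)) ∂volume) ≤
      ENNReal.ofReal (2 * π * (π / 2) ^ (k + 1 - 1)) := by
    have hc : (-(((k + 1 : ℕ) : ℝ)) / 2) = -((k : ℝ) + 1) / 2 := by push_cast; ring
    rw [hc]
    have hsub : {x : Fin (k + 2) → ℝ | (∀ j, 0 ≤ x j) ∧ ∑ j, x j ≤ 1} ⊆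
        {x : Fin (k + 2) → ℝ | (∀ j, 0 ≤ x j) ∧ x 0 + x 1 ≤ 1} := by
      rintro x ⟨hpos, hsum⟩
      refine ⟨hpos, ?_⟩
      have hne : (0 : Fin (k + 2)) ≠ 1 := by simp [Fin.ext_iff]
      have h1 : x 0 + x 1 = ∑ j ∈ ({0, 1} : Finset (Fin (k + 2))), x j :=
        (Finset.sum_pair hne).symm
      have h2 : ∑ j ∈ ({0, 1} : Finset (Fin (k + 2))), x j ≤ ∑ j, x j :=
        Finset.sum_le_sum_of_subset_of_nonneg (Finset.subset_univ _)
          (fun j _ _ => hpos j)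
      linarith
    refine le_trans (lintegral_mono_set hsub) (le_trans (key k) ?_)
    rw [show k + 1 - 1 = k from rfl]
    rw [← ENNReal.ofReal_pow (by positivity), ← ENNReal.ofReal_mul (by positivity)]
    refine ENNReal.ofReal_le_ofReal ?_
    have hsqrt : Real.sqrt 2 ≤ π := by
      nlinarith [Real.sq_sqrt (by norm_num : (2:ℝ) ≥ 0), Real.sqrt_nonneg 2,
        Real.pi_gt_three]
    calc (π / 2) ^ k * (2 * Real.sqrt 2) ≤ (π / 2) ^ k * (2 * π) := by
          have h := hsqrt
          gcongr
      _ = 2 * π * (π / 2) ^ k := by ring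
  exact ⟨hmain, lt_of_le_of_lt hmain ENNReal.ofReal_lt_top⟩
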